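/- Define Pol_k = Σ_{n∈ℕ, σ_∞(n)=k} z^n for k ≥ 0 (a polynomial, since only finitely many n satisfy σ_∞(n)=k). Then the operator ℱ (acting coefficientwise by (ℱa)_n = a_{T(n)}) satisfies: ℱ(Pol_0) = Pol_1, ℱ(Pol_1) = Pol_0 + Pol_2, and ℱ(Pol_k) = Pol_{k+1} for k ≥ 2. -/

import Mathlib

open Classical
noncomputable section

/-- The reduced Collatz map. -/
def collatzT (n : ℕ) : ℕ := if n % 2 = 1 then (3 * n + 1) / 2 else n / 2

/-- The total stopping time `σ_∞(n) ∈ ℕ ∪ {∞}`: minimal `k` with `T^k(n) = 1`,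
`∞` if none, with the convention `σ_∞(0) = 0`. -/
noncomputable def sigmaInf (n : ℕ) : ℕ∞ :=
  if n = 0 then 0
  else if h : ∃ k : ℕ, collatzT^[k] n = 1 then (Nat.find h : ℕ∞) else ⊤

/-- The coefficient sequence of `Pol_k = Σ_{n ≥ 1, σ_∞(n) = k} z^n`. -/
noncomputable def Pol (k : ℕ) : ℕ → ℂ :=
  fun n => if 1 ≤ n ∧ sigmaInf n = (k : ℕ∞) then 1 else 0

/-- The operator `ℱ` acting coefficientwise: `(ℱa)_n = a_{T(n)}`. -/
def opFc (a : ℕ → ℂ) : ℕ → ℂ := fun n => a (collatzT n)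

lemma collatzT_pos {n : ℕ} (h : 1 ≤ n) : 1 ≤ collatzT n := by
  unfold collatzT; split <;> omega

lemma collatzT_one : collatzT 1 = 2 := by decide

lemma sigmaInf_one : sigmaInf 1 = 0 := by
  have h : ∃ k : ℕ, collatzT^[k] 1 = 1 := ⟨0, rfl⟩
  simp only [sigmaInf, if_neg one_ne_zero, dif_pos h]
  norm_cast
  exact (Nat.find_eq_zero h).mpr rfl

lemma sigmaInf_two : sigmaInf 2 = 1 := by
  have h : ∃ k : ℕ, collatzT^[k] 2 = 1 := ⟨1, by decide⟩
  simp only [sigmaInf, if_neg (by norm_num : (2:ℕ) ≠ 0), dif_pos h]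
  norm_cast
  rw [Nat.find_eq_iff]
  refine ⟨by decide, ?_⟩
  intro m hm
  interval_cases m
  decide

lemma sigmaInf_succ {n : ℕ} (hn : 2 ≤ n) :
    sigmaInf n = sigmaInf (collatzT n) + 1 := by
  have hn0 : n ≠ 0 := by omega
  have ht1 : 1 ≤ collatzT n := collatzT_pos (by omega)
  have ht0 : collatzT n ≠ 0 := by omega
  by_cases h : ∃ k : ℕ, collatzT^[k] n = 1
  · have h' : ∃ k : ℕ, collatzT^[k] (collatzT n) = 1 := by
      obtain ⟨k, hk⟩ := h
      cases k with
      | zero => simp only [Function.iterate_zero, id_eq] at hk; omega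
      | succ m => exact ⟨m, by rwa [Function.iterate_succ_apply] at hk⟩
    simp only [sigmaInf, if_neg hn0, if_neg ht0, dif_pos h, dif_pos h']
    have h1 : Nat.find h = Nat.find h' + 1 := by
      apply le_antisymm
      · exact Nat.find_le (by rw [Function.iterate_succ_apply]; exact Nat.find_spec h')
      · have hf := Nat.find_spec h
        have hpos : Nat.find h ≠ 0 := by
          intro h0
          rw [h0] at hf; simp only [Function.iterate_zero, id_eq] at hf; omega
        obtain ⟨m, hm⟩ := Nat.exists_eq_succ_of_ne_zero hpos
        rw [hm, Function.iterate_succ_apply] at hf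
        have hle : Nat.find h' ≤ m := Nat.find_le hf
        omega
    rw [h1]; push_cast; ring
  · have h' : ¬ ∃ k : ℕ, collatzT^[k] (collatzT n) = 1 := by
      rintro ⟨k, hk⟩
      exact h ⟨k + 1, by rwa [Function.iterate_succ_apply]⟩
    simp [sigmaInf, if_neg hn0, if_neg ht0, dif_neg h, dif_neg h']

lemma sigmaInf_ne_zero {n : ℕ} (hn : 2 ≤ n) : sigmaInf n ≠ 0 := by
  rw [sigmaInf_succ hn]
  intro h
  cases hc : sigmaInf (collatzT n) with
  | top => rw [hc] at h; simp at h
  | coe m => rw [hc] at h; exact_mod_cast h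

lemma key {n : ℕ} (hn : 2 ≤ n) (k : ℕ) :
    sigmaInf (collatzT n) = (k : ℕ∞) ↔ sigmaInf n = ((k + 1 : ℕ) : ℕ∞) := by
  rw [sigmaInf_succ hn]
  constructor
  · intro h; rw [h]; push_cast; ring
  · intro h
    have h2 : sigmaInf (collatzT n) + 1 = (k : ℕ∞) + 1 := by rw [h]; push_cast; ring
    exact WithTop.add_right_cancel (by exact ENat.one_ne_top) h2

lemma opF_large {n : ℕ} (hn : 2 ≤ n) (k : ℕ) : opFc (Pol k) n = Pol (k + 1) n := by
  unfold opFc Pol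
  have h1 : 1 ≤ collatzT n := collatzT_pos (by omega)
  have h2 : 1 ≤ n := by omega
  simp only [h1, h2, true_and, key hn k]

/-- `ℱ(Pol_0) = Pol_1`, `ℱ(Pol_1) = Pol_0 + Pol_2`, and
`ℱ(Pol_k) = Pol_{k+1}` for `k ≥ 2`. -/
theorem opF_on_Pol :
    opFc (Pol 0) = Pol 1 ∧
      opFc (Pol 1) = (fun n => Pol 0 n + Pol 2 n) ∧
      ∀ k : ℕ, 2 ≤ k → opFc (Pol k) = Pol (k + 1) := by
  refine ⟨?_, ?_, ?_⟩
  · funext n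
    match n with
    | 0 => simp [opFc, Pol, collatzT]
    | 1 =>
      simp [opFc, Pol, collatzT_one, sigmaInf_one, sigmaInf_two]
    | (m + 2) => exact opF_large (by omega) 0
  · funext n
    match n with
    | 0 => simp [opFc, Pol, collatzT]
    | 1 =>
      simp [opFc, Pol, collatzT_one, sigmaInf_one, sigmaInf_two]
    | (m + 2) =>
      have h0 : Pol 0 (m + 2) = 0 := by
        simp [Pol, sigmaInf_ne_zero (show 2 ≤ m + 2 by omega)]
      rw [opF_large (by omega) 1, h0, zero_add]
  · intro k hk
    funext n
    match n with
    | 0 => simp [opFc, Pol, collatzT]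
    | 1 =>
      have h1 : (1 : ℕ∞) ≠ (k : ℕ∞) := by
        intro h
        have h' : (1:ℕ) = k := by exact_mod_cast h
        omega
      have h2 : (0 : ℕ∞) ≠ (k : ℕ∞) + 1 := by
        intro h
        have h' : (0:ℕ) = k + 1 := by exact_mod_cast h
        omega
      simp [opFc, Pol, collatzT_one, sigmaInf_one, sigmaInf_two, h1, h2]
    | (m + 2) => exact opF_large (by omega) k
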